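/- Consider a three-agent instance in which v_a(g) < (2/3)·MMS_a for every agent a and every good g (no (2/3)-high-valued good). If there exists a reducible bundle with respect to some agent, then the instance admits a (2/3)-MMS allocation. -/

import Mathlib

open scoped BigOperators Classical

/-- An instance of fair division with subjective divisibility: `n` agents and `m` goods,
each good of total amount 1.  Each agent `i` assigns a nonnegative value `v i g` to each
good `g` and regards each good as either divisible or indivisible for her. -/
structure FairDivision (n m : ℕ) where
  /-- agent `i`'s value for good `g` -/
  v : Fin n → Fin m → ℝ
  v_nonneg : ∀ i g, 0 ≤ v i g
  /-- `divisible i g` means agent `i` regards good `g` as divisible -/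
  divisible : Fin n → Fin m → Prop

namespace FairDivision

variable {n m : ℕ}

/-- Agent `i`'s utility from receiving fraction `t ∈ [0,1]` of good `g`:
`t * v i g` if `g` is divisible for `i`; `v i g` if `g` is indivisible for `i` and `t = 1`;
and `0` if `g` is indivisible for `i` and `t < 1`. -/
noncomputable def frUtil (I : FairDivision n m) (i : Fin n) (g : Fin m) (t : ℝ) : ℝ :=
  if I.divisible i g then t * I.v i g else if t = 1 then I.v i g else 0

/-- Agent `i`'s (additive) utility for a bundle `b`, given by the fraction `b g` of each good. -/
noncomputable def util (I : FairDivision n m) (i : Fin n) (b : Fin m → ℝ) : ℝ :=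
  ∑ g, I.frUtil i g (b g)

/-- Agent `i`'s utility for the bundle `b` with good `g` omitted. -/
noncomputable def utilMinus (I : FairDivision n m) (i : Fin n) (b : Fin m → ℝ) (g : Fin m) : ℝ :=
  ∑ g' ∈ Finset.univ.erase g, I.frUtil i g' (b g')

/-- A complete allocation: fractions in `[0,1]` summing to `1` for every good. -/
def IsAllocation (I : FairDivision n m) (x : Fin n → Fin m → ℝ) : Prop :=
  (∀ i g, 0 ≤ x i g ∧ x i g ≤ 1) ∧ ∀ g, ∑ i, x i g = 1

/-- A partial allocation: fractions in `[0,1]` summing to at most `1` for every good. -/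
def IsPartialAllocation (I : FairDivision n m) (x : Fin n → Fin m → ℝ) : Prop :=
  (∀ i g, 0 ≤ x i g ∧ x i g ≤ 1) ∧ ∀ g, ∑ i, x i g ≤ 1

/-- The maximin share of agent `i`: the supremum, over all fractional `n`-partitions
`P` of the goods, of the minimum over the parts `P j` of agent `i`'s utility. -/
noncomputable def MMS (I : FairDivision n m) (i : Fin n) : ℝ :=
  sSup { r : ℝ | ∃ P : Fin n → Fin m → ℝ, I.IsAllocation P ∧ r = ⨅ j, I.util i (P j) }

/-- Non-wastefulness: every positive fraction an agent receives yields her positive utility. -/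
def NonWasteful (I : FairDivision n m) (x : Fin n → Fin m → ℝ) : Prop :=
  ∀ i g, 0 < x i g → 0 < I.frUtil i g (x i g)

/-- Envy-freeness. -/
def EF (I : FairDivision n m) (x : Fin n → Fin m → ℝ) : Prop :=
  ∀ i j, I.util i (x j) ≤ I.util i (x i)

/-- Envy-freeness for mixed goods: for all agents `i, j`, if every good `j` receives a
positive fraction of is indivisible for `i`, then `i` does not envy `j` after removing some
such good from `j`'s bundle; otherwise `i` does not envy `j`. -/
def EFM (I : FairDivision n m) (x : Fin n → Fin m → ℝ) : Prop :=
  ∀ i j,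
    ((∀ g, 0 < x j g → ¬ I.divisible i g) →
      ∃ g, 0 < x j g ∧ I.utilMinus i (x j) g ≤ I.util i (x i)) ∧
    ((¬ ∀ g, 0 < x j g → ¬ I.divisible i g) → I.util i (x j) ≤ I.util i (x i))

/-- EFXM: as EFM, but the envy must vanish after removing any positively valued such good. -/
def EFXM (I : FairDivision n m) (x : Fin n → Fin m → ℝ) : Prop :=
  ∀ i j,
    ((∀ g, 0 < x j g → ¬ I.divisible i g) →
      ∀ g, 0 < x j g → 0 < I.v i g → I.utilMinus i (x j) g ≤ I.util i (x i)) ∧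
    ((¬ ∀ g, 0 < x j g → ¬ I.divisible i g) → I.util i (x j) ≤ I.util i (x i))

/-- EF1M: if `j`'s bundle contains (a positive fraction of) some good that `i` regards as
indivisible and values positively, the envy of `i` must vanish after removing some such good;
otherwise `i` does not envy `j`. -/
def EF1M (I : FairDivision n m) (x : Fin n → Fin m → ℝ) : Prop :=
  ∀ i j,
    ((∃ g, 0 < x j g ∧ ¬ I.divisible i g ∧ 0 < I.v i g) →
      ∃ g, 0 < x j g ∧ ¬ I.divisible i g ∧ 0 < I.v i g ∧
        I.utilMinus i (x j) g ≤ I.util i (x i)) ∧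
    ((¬ ∃ g, 0 < x j g ∧ ¬ I.divisible i g ∧ 0 < I.v i g) → I.util i (x j) ≤ I.util i (x i))

/-- Pareto optimality (among complete allocations). -/
def ParetoOptimal (I : FairDivision n m) (x : Fin n → Fin m → ℝ) : Prop :=
  ¬ ∃ y, I.IsAllocation y ∧ (∀ i, I.util i (x i) ≤ I.util i (y i)) ∧
    ∃ i, I.util i (x i) < I.util i (y i)

/-- In a 3-agent instance, `B` (a set of whole goods) is a reducible bundle with respect to
agent `i`: `u_i(B) ≥ (2/3)·MMS_i`, `u_j(M∖B) ≥ 2·MMS_j` for some agent `j ≠ i`, and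
`u_k(M∖B) ≥ (4/3)·MMS_k` for the remaining agent `k`. -/
def IsReducible (I : FairDivision 3 m) (B : Finset (Fin m)) (i : Fin 3) : Prop :=
  2 / 3 * I.MMS i ≤ ∑ g ∈ B, I.v i g ∧
    ∃ j, j ≠ i ∧ 2 * I.MMS j ≤ ∑ g ∈ Bᶜ, I.v j g ∧
      ∀ k, k ≠ i → k ≠ j → 4 / 3 * I.MMS k ≤ ∑ g ∈ Bᶜ, I.v k g

end FairDivision

lemma split_lemma {m : ℕ} (vj vk : Fin m → ℝ) (hvj0 : ∀ g, 0 ≤ vj g)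
    (hvk0 : ∀ g, 0 ≤ vk g) (T : Finset (Fin m)) (cj ck : ℝ)
    (hhigh : ∀ g, vj g < cj)
    (hTj : 3 * cj ≤ ∑ g ∈ T, vj g) (hTk : 2 * ck ≤ ∑ g ∈ T, vk g) :
    ∃ S ⊆ T, (cj ≤ ∑ g ∈ S, vj g ∧ ck ≤ ∑ g ∈ T \ S, vk g) ∨
      (ck ≤ ∑ g ∈ S, vk g ∧ cj ≤ ∑ g ∈ T \ S, vj g) := by
  classical
  set L := T.toList with hL
  have hnd : L.Nodup := T.nodup_toList
  have hLT : L.toFinset = T := T.toList_toFinset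
  set Sf : ℕ → Finset (Fin m) := fun t => (L.take t).toFinset with hSf
  have hsub : ∀ t, Sf t ⊆ T := by
    intro t x hx
    rw [← hLT]
    rw [hSf] at hx
    rw [List.mem_toFinset] at hx ⊢
    exact List.take_subset t L hx
  have hS0 : Sf 0 = ∅ := by simp [hSf]
  have hSfull : Sf L.length = T := by
    simp [hSf, List.take_of_length_le le_rfl, hLT]
  have hstep : ∀ (va : Fin m → ℝ) (t : ℕ) (ht : t < L.length),
      ∑ g ∈ Sf (t+1), va g = ∑ g ∈ Sf t, va g + va (L.get ⟨t, ht⟩) := by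
    intro va t ht
    have htake : L.take (t+1) = L.take t ++ [L.get ⟨t, ht⟩] := by
      rw [← List.take_concat_get ht]
      simp [List.concat_eq_append]
    have hnd' : (L.take (t+1)).Nodup := (List.take_sublist _ _).nodup hnd
    rw [htake] at hnd'
    have hnotmem : L.get ⟨t, ht⟩ ∉ (L.take t).toFinset := by
      rcases List.nodup_append.mp hnd' with ⟨_, _, hdisj⟩
      rw [List.mem_toFinset]
      intro hmem
      exact hdisj _ hmem _ (by simp) rfl
    have hins : Sf (t+1) = insert (L.get ⟨t, ht⟩) (Sf t) := by
      rw [hSf]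
      simp only [htake, List.toFinset_append, List.toFinset_cons, List.toFinset_nil,
        insert_empty_eq]
      rw [Finset.union_comm, Finset.insert_eq]
    rw [hins, Finset.sum_insert hnotmem]
    ring
  have hsdiff : ∀ (va : Fin m → ℝ) (t : ℕ),
      ∑ g ∈ T \ Sf t, va g = ∑ g ∈ T, va g - ∑ g ∈ Sf t, va g := by
    intro va t
    have := Finset.sum_sdiff (hsub t) (f := va)
    linarith
  have hnneg : ∀ (va : Fin m → ℝ), (∀ g, 0 ≤ va g) → ∀ t, 0 ≤ ∑ g ∈ Sf t, va g :=
    fun va h0 t => Finset.sum_nonneg fun g _ => h0 g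
  have hex : ∃ t, ck ≤ ∑ g ∈ Sf t, vk g := by
    rcases le_or_gt ck 0 with h | h
    · exact ⟨0, by rw [hS0]; simpa using h⟩
    · exact ⟨L.length, by rw [hSfull]; linarith⟩
  set t0 := Nat.find hex with ht0
  have hP : ck ≤ ∑ g ∈ Sf t0, vk g := Nat.find_spec hex
  have hmin : ∀ s, s < t0 → ∑ g ∈ Sf s, vk g < ck := by
    intro s hs
    have := Nat.find_min hex hs
    exact not_le.mp this
  rcases le_or_gt (∑ g ∈ Sf t0, vj g) (2 * cj) with hA | hB
  · refine ⟨Sf t0, hsub t0, Or.inr ⟨hP, ?_⟩⟩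
    rw [hsdiff]
    linarith
  · rcases Nat.eq_zero_or_pos t0 with h0 | hpos
    · rw [h0, hS0, Finset.sum_empty] at hB hP
      refine ⟨∅, Finset.empty_subset T, Or.inl ⟨?_, ?_⟩⟩
      · rw [Finset.sum_empty]; linarith
      · rw [Finset.sdiff_empty]
        have := Finset.sum_nonneg (fun g (_ : g ∈ T) => hvk0 g)
        linarith
    · have hck : 0 < ck := by
        have := hmin 0 hpos
        rw [hS0, Finset.sum_empty] at this
        exact this
      have ht0le : t0 ≤ L.length := Nat.find_min' hex (by rw [hSfull]; linarith)
      have hjt0 : cj ≤ ∑ g ∈ Sf t0, vj g := by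
        rcases le_or_gt cj 0 with h | h
        · exact h.trans (hnneg vj hvj0 t0)
        · linarith
      have hexj : ∃ s, cj ≤ ∑ g ∈ Sf s, vj g := ⟨t0, hjt0⟩
      set s0 := Nat.find hexj with hs0
      have hQ : cj ≤ ∑ g ∈ Sf s0, vj g := Nat.find_spec hexj
      have hs0le : s0 ≤ t0 := Nat.find_min' hexj hjt0
      have hs0lt : s0 < t0 := by
        rcases lt_or_eq_of_le hs0le with h | h
        · exact h
        exfalso
        obtain ⟨u, hu⟩ : ∃ u, t0 = u + 1 := ⟨t0 - 1, by omega⟩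
        have hult : u < L.length := by omega
        have h1 : ∑ g ∈ Sf u, vj g < cj := by
          have := Nat.find_min hexj (show u < s0 by omega)
          exact not_le.mp this
        have h2 := hstep vj u hult
        have h3 := hhigh (L.get ⟨u, hult⟩)
        rw [hu] at hB
        linarith
      refine ⟨Sf s0, hsub s0, Or.inl ⟨hQ, ?_⟩⟩
      rw [hsdiff]
      have := hmin s0 hs0lt
      linarith


lemma util_indicator {n m : ℕ} (I : FairDivision n m) (a : Fin n) (S : Finset (Fin m)) :
    I.util a (fun g => if g ∈ S then (1:ℝ) else 0) = ∑ g ∈ S, I.v a g := by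
  have h : ∀ g, I.frUtil a g (if g ∈ S then (1:ℝ) else 0) = if g ∈ S then I.v a g else 0 := by
    intro g
    by_cases hg : g ∈ S <;> simp [FairDivision.frUtil, hg]
  rw [FairDivision.util]
  simp only [h]
  rw [Finset.sum_ite_mem, Finset.univ_inter]

/-- A three-agent instance with no (2/3)-high-valued good that has a reducible
bundle with respect to some agent admits a (2/3)-MMS allocation. -/
theorem three_agent_reducible_bundle (m : ℕ) (I : FairDivision 3 m)
    (hNoHigh : ∀ a g, I.v a g < 2 / 3 * I.MMS a)
    (hRed : ∃ (B : Finset (Fin m)) (i : Fin 3), I.IsReducible B i) :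
    ∃ x, I.IsAllocation x ∧ ∀ i, 2 / 3 * I.MMS i ≤ I.util i (x i) := by
  classical
  obtain ⟨B, i0, hiB, j, hji, hjT, hkT⟩ := hRed
  have hexk : ∀ a b : Fin 3, ∃ c : Fin 3, c ≠ a ∧ c ≠ b := by decide
  have huniq : ∀ a b c d : Fin 3, a ≠ b → c ≠ a → c ≠ b → d ≠ a → d ≠ b → c = d := by decide
  obtain ⟨k0, hk0i, hk0j⟩ := hexk i0 j
  have hkval : 4 / 3 * I.MMS k0 ≤ ∑ g ∈ Bᶜ, I.v k0 g := hkT k0 hk0i hk0j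
  obtain ⟨S, hST, hcase⟩ := split_lemma (I.v j) (I.v k0) (I.v_nonneg j) (I.v_nonneg k0)
    Bᶜ (2 / 3 * I.MMS j) (2 / 3 * I.MMS k0) (fun g => hNoHigh j g)
    (by linarith) (by linarith)
  obtain ⟨Pj, Pk, hPun, hdis, hj2, hk2⟩ :
      ∃ Pj Pk : Finset (Fin m), Pj ∪ Pk = Bᶜ ∧ Disjoint Pj Pk ∧
        2 / 3 * I.MMS j ≤ ∑ g ∈ Pj, I.v j g ∧ 2 / 3 * I.MMS k0 ≤ ∑ g ∈ Pk, I.v k0 g := by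
    rcases hcase with ⟨h1, h2⟩ | ⟨h1, h2⟩
    · exact ⟨S, Bᶜ \ S, Finset.union_sdiff_of_subset hST, Finset.disjoint_sdiff, h1, h2⟩
    · exact ⟨Bᶜ \ S, S, Finset.sdiff_union_of_subset hST,
        Finset.sdiff_disjoint, h2, h1⟩
  set P : Fin 3 → Finset (Fin m) := fun a => if a = i0 then B else if a = j then Pj else Pk
    with hPdef
  have hPi0 : P i0 = B := by simp [hPdef]
  have hPj : P j = Pj := by simp [hPdef, hji]
  have hPk : P k0 = Pk := by simp [hPdef, hk0i, hk0j]
  have hPsub : ∀ b, b ≠ i0 → P b ⊆ Bᶜ := by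
    intro b hb
    rw [hPdef]
    simp only [if_neg hb]
    split_ifs
    · rw [← hPun]; exact Finset.subset_union_left
    · rw [← hPun]; exact Finset.subset_union_right
  have hcover : ∀ g : Fin m, ∃! a : Fin 3, g ∈ P a := by
    intro g
    by_cases hgB : g ∈ B
    · refine ⟨i0, by show g ∈ P i0; rwa [hPi0], ?_⟩
      intro b hb
      have hb' : g ∈ P b := hb
      by_contra hbne
      exact (Finset.mem_compl.mp (hPsub b hbne hb')) hgB
    · have hgT : g ∈ Pj ∪ Pk := by rw [hPun]; exact Finset.mem_compl.mpr hgB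
      rcases Finset.mem_union.mp hgT with hgj | hgk
      · refine ⟨j, by show g ∈ P j; rwa [hPj], ?_⟩
        intro b hb
        have hb' : g ∈ P b := hb
        by_cases hb1 : b = i0
        · exact absurd (by rwa [hb1, hPi0] at hb') hgB
        by_cases hb2 : b = j
        · exact hb2
        · exfalso
          have hPbk : P b = Pk := by rw [hPdef]; simp [hb1, hb2]
          rw [hPbk] at hb'
          exact Finset.disjoint_left.mp hdis hgj hb'
      · refine ⟨k0, by show g ∈ P k0; rwa [hPk], ?_⟩
        intro b hb
        have hb' : g ∈ P b := hb
        by_cases hb1 : b = i0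
        · exact absurd (by rwa [hb1, hPi0] at hb') hgB
        by_cases hb2 : b = j
        · exfalso
          rw [hb2, hPj] at hb'
          exact Finset.disjoint_left.mp hdis hb' hgk
        · exact huniq i0 j b k0 (Ne.symm hji) hb1 hb2 hk0i hk0j
  have hval : ∀ a : Fin 3, 2 / 3 * I.MMS a ≤ ∑ g ∈ P a, I.v a g := by
    intro a
    by_cases h1 : a = i0
    · rw [h1, hPi0]; exact hiB
    by_cases h2 : a = j
    · rw [h2, hPj]; exact hj2
    · have := huniq i0 j a k0 (Ne.symm hji) h1 h2 hk0i hk0j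
      rw [this, hPk]; exact hk2
  refine ⟨fun a g => if g ∈ P a then (1:ℝ) else 0, ⟨fun a g => ?_, fun g => ?_⟩, fun a => ?_⟩
  · dsimp only
    split_ifs <;> norm_num
  · dsimp only
    obtain ⟨a0, ha0, hu⟩ := hcover g
    have hiff : ∀ a : Fin 3, (g ∈ P a) = (a = a0) := by
      intro a
      simp only [eq_iff_iff]
      exact ⟨fun h => hu a h, fun h => h ▸ ha0⟩
    simp only [hiff]
    simp
  · dsimp only
    rw [util_indicator]
    exact hval a
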